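/- With M₂ as above, every eigenvalue λ_i of M₂ (listed in decreasing order, i ≤ r = rank(M₂)) satisfies λ_i ≤ d_{2,i}²(1 + d_{1,1}²)/(d_{2,i}²(1 + d_{1,1}²) + 1), and hence Tr((I_p - M₂)⁻¹) ≤ p + Σ_{i=1}^r d_{2,i}²(1 + d_{1,1}²). -/

import Mathlib

open Matrix

open Finset Submodule

namespace M2Aux

variable {n m : ℕ}

lemma dot_self_nonneg (x : Fin n → ℝ) : 0 ≤ x ⬝ᵥ x :=
  Finset.sum_nonneg fun i _ => mul_self_nonneg _

lemma dot_self_pos {x : Fin n → ℝ} (h : x ≠ 0) : 0 < x ⬝ᵥ x := by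
  rcases (dot_self_nonneg x).lt_or_eq with h2 | h2
  · exact h2
  · exact absurd (dotProduct_self_eq_zero.mp h2.symm) h

lemma sum_dot {ι : Type*} [Fintype ι] (c : ι → ℝ) (w : ι → Fin n → ℝ) (x : Fin n → ℝ) :
    (∑ k, c k • w k) ⬝ᵥ x = ∑ k, c k * (w k ⬝ᵥ x) := by
  simp only [dotProduct, Finset.sum_apply, Pi.smul_apply, smul_eq_mul, Finset.sum_mul,
    Finset.mul_sum]
  rw [Finset.sum_comm]
  exact Finset.sum_congr rfl fun k _ => Finset.sum_congr rfl fun i _ => by ring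

lemma dot_sum {ι : Type*} [Fintype ι] (c : ι → ℝ) (w : ι → Fin n → ℝ) (x : Fin n → ℝ) :
    x ⬝ᵥ (∑ k, c k • w k) = ∑ k, c k * (x ⬝ᵥ w k) := by
  rw [dotProduct_comm, sum_dot]
  exact Finset.sum_congr rfl fun k _ => by rw [dotProduct_comm]

lemma exists_onb {A : Matrix (Fin n) (Fin n) ℝ} (hA : A.IsHermitian) :
    ∃ v : Fin n → (Fin n → ℝ),
      (∀ j k, v j ⬝ᵥ v k = if j = k then 1 else 0) ∧
      (∀ y : Fin n → ℝ, y = ∑ k, (v k ⬝ᵥ y) • v k) ∧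
      (∀ k, A *ᵥ v k = hA.eigenvalues k • v k) := by
  classical
  set V : Matrix (Fin n) (Fin n) ℝ := (hA.eigenvectorUnitary : Matrix (Fin n) (Fin n) ℝ) with hV
  have hsV : star V * V = 1 := Unitary.coe_star_mul_self hA.eigenvectorUnitary
  have hVs : V * star V = 1 := Unitary.coe_mul_star_self hA.eigenvectorUnitary
  have hstar : star V = Vᵀ := by ext i j; simp [Matrix.star_apply]
  rw [hstar] at hsV hVs
  refine ⟨fun k => fun i => V i k, ?_, ?_, ?_⟩
  · intro j k
    have := congrFun (congrFun hsV j) k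
    simpa [Matrix.mul_apply, Matrix.one_apply, dotProduct] using this
  · intro y
    funext i
    have h1 : (V * Vᵀ) *ᵥ y = y := by rw [hVs, Matrix.one_mulVec]
    have h2 := congrFun h1 i
    rw [← Matrix.mulVec_mulVec] at h2
    calc y i = (V *ᵥ (Vᵀ *ᵥ y)) i := h2.symm
    _ = ∑ k, V i k * ∑ x, V x k * y x := by
        simp [Matrix.mulVec, dotProduct]
    _ = (∑ k, ((fun i => V i k) ⬝ᵥ y) • (fun i => V i k)) i := by
        simp [dotProduct, Finset.sum_apply]
        exact Finset.sum_congr rfl fun k _ => by ring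
  · intro k
    have := hA.mulVec_eigenvectorBasis k
    have hv : (fun i => V i k) = ⇑(hA.eigenvectorBasis k) := by
      funext i; exact hA.eigenvectorUnitary_apply i k
    show A *ᵥ (fun i => V i k) = hA.eigenvalues k • (fun i => V i k)
    rw [hv]; exact this

variable {A : Matrix (Fin n) (Fin n) ℝ} {v : Fin n → (Fin n → ℝ)} {μ : Fin n → ℝ}

lemma dot_expand (hcompl : ∀ y : Fin n → ℝ, y = ∑ k, (v k ⬝ᵥ y) • v k) (x : Fin n → ℝ) :
    x ⬝ᵥ x = ∑ k, (v k ⬝ᵥ x) ^ 2 := by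
  calc x ⬝ᵥ x = (∑ k, (v k ⬝ᵥ x) • v k) ⬝ᵥ x := by rw [← hcompl x]
  _ = ∑ k, (v k ⬝ᵥ x) ^ 2 := by rw [sum_dot]; exact Finset.sum_congr rfl fun k _ => by ring

lemma Q_expand (hAsymm : Aᵀ = A) (hcompl : ∀ y : Fin n → ℝ, y = ∑ k, (v k ⬝ᵥ y) • v k)
    (heig : ∀ k, A *ᵥ v k = μ k • v k) (x : Fin n → ℝ) :
    x ⬝ᵥ A *ᵥ x = ∑ k, μ k * (v k ⬝ᵥ x) ^ 2 := by
  have hsymm : ∀ k, v k ⬝ᵥ (A *ᵥ x) = μ k * (v k ⬝ᵥ x) := by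
    intro k
    rw [Matrix.dotProduct_mulVec, ← Matrix.mulVec_transpose, hAsymm, heig k,
      smul_dotProduct]
    rfl
  calc x ⬝ᵥ A *ᵥ x = (∑ k, (v k ⬝ᵥ x) • v k) ⬝ᵥ (A *ᵥ x) := by rw [← hcompl x]
  _ = ∑ k, μ k * (v k ⬝ᵥ x) ^ 2 := by
      rw [sum_dot]
      exact Finset.sum_congr rfl fun k _ => by rw [hsymm k]; ring

lemma coeff_eq_zero (hortho : ∀ j k, v j ⬝ᵥ v k = if j = k then 1 else 0)
    {s : Finset (Fin n)} {k : Fin n} (hk : k ∉ s) {x : Fin n → ℝ}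
    (hx : x ∈ span ℝ (v '' ↑s)) : v k ⬝ᵥ x = 0 := by
  induction hx using Submodule.span_induction with
  | mem y hy =>
    obtain ⟨j, hj, rfl⟩ := hy
    rw [hortho k j, if_neg]
    rintro rfl; exact hk hj
  | zero => simp
  | add y z _ _ hy hz => rw [dotProduct_add, hy, hz, add_zero]
  | smul c y _ hy => rw [dotProduct_smul, hy, smul_zero]

lemma finrank_span_onb (hortho : ∀ j k, v j ⬝ᵥ v k = if j = k then 1 else 0)
    (s : Finset (Fin n)) : Module.finrank ℝ (span ℝ (v '' ↑s)) = s.card := by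
  classical
  have hli : LinearIndependent ℝ (fun k : ↥s => v k) := by
    rw [Fintype.linearIndependent_iff]
    intro g hg j
    have h0 := congrArg (fun y => v (j : Fin n) ⬝ᵥ y) hg
    simp only [dotProduct_zero] at h0
    rw [dot_sum g (fun i : ↥s => v (i : Fin n))] at h0
    rw [Finset.sum_eq_single j] at h0
    · simpa [hortho] using h0
    · intro b _ hbj
      have hz : v (j : Fin n) ⬝ᵥ v (b : Fin n) = 0 := by
        rw [hortho, if_neg]; exact fun h => hbj (Subtype.ext h.symm)
      rw [hz, mul_zero]
    · intro h; exact absurd (Finset.mem_univ j) h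
  have hrange : Set.range (fun k : ↥s => v k) = v '' ↑s := by ext y; simp
  have := finrank_span_eq_card hli
  rw [hrange] at this
  simpa using this

lemma Q_le_univ (hAsymm : Aᵀ = A) (hcompl : ∀ y : Fin n → ℝ, y = ∑ k, (v k ⬝ᵥ y) • v k)
    (heig : ∀ k, A *ᵥ v k = μ k • v k) {t : ℝ} (ht : ∀ k, μ k ≤ t) (x : Fin n → ℝ) :
    x ⬝ᵥ A *ᵥ x ≤ t * (x ⬝ᵥ x) := by
  rw [Q_expand hAsymm hcompl heig, dot_expand hcompl, Finset.mul_sum]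
  exact Finset.sum_le_sum fun k _ => mul_le_mul_of_nonneg_right (ht k) (sq_nonneg _)

lemma Q_le_span (hortho : ∀ j k, v j ⬝ᵥ v k = if j = k then 1 else 0)
    (hAsymm : Aᵀ = A) (hcompl : ∀ y : Fin n → ℝ, y = ∑ k, (v k ⬝ᵥ y) • v k)
    (heig : ∀ k, A *ᵥ v k = μ k • v k) {s : Finset (Fin n)} {t : ℝ}
    (ht : ∀ k ∈ s, μ k ≤ t) (ht0 : 0 ≤ t) {x : Fin n → ℝ}
    (hx : x ∈ span ℝ (v '' ↑s)) :
    x ⬝ᵥ A *ᵥ x ≤ t * (x ⬝ᵥ x) := by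
  rw [Q_expand hAsymm hcompl heig, dot_expand hcompl, Finset.mul_sum]
  refine Finset.sum_le_sum fun k _ => ?_
  by_cases hk : k ∈ s
  · exact mul_le_mul_of_nonneg_right (ht k hk) (sq_nonneg _)
  · rw [coeff_eq_zero hortho hk hx]; simp

lemma Q_ge_span (hortho : ∀ j k, v j ⬝ᵥ v k = if j = k then 1 else 0)
    (hAsymm : Aᵀ = A) (hcompl : ∀ y : Fin n → ℝ, y = ∑ k, (v k ⬝ᵥ y) • v k)
    (heig : ∀ k, A *ᵥ v k = μ k • v k) {s : Finset (Fin n)} {t : ℝ}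
    (ht : ∀ k ∈ s, t ≤ μ k) {x : Fin n → ℝ}
    (hx : x ∈ span ℝ (v '' ↑s)) :
    t * (x ⬝ᵥ x) ≤ x ⬝ᵥ A *ᵥ x := by
  rw [Q_expand hAsymm hcompl heig, dot_expand hcompl, Finset.mul_sum]
  refine Finset.sum_le_sum fun k _ => ?_
  by_cases hk : k ∈ s
  · exact mul_le_mul_of_nonneg_right (ht k hk) (sq_nonneg _)
  · rw [coeff_eq_zero hortho hk hx]; simp

lemma mulVec_sum_smul {ι : Type*} [Fintype ι] (P : Matrix (Fin n) (Fin n) ℝ)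
    (c : ι → ℝ) (w : ι → Fin n → ℝ) :
    P *ᵥ (∑ k, c k • w k) = ∑ k, c k • (P *ᵥ w k) := by
  rw [← Matrix.mulVecLin_apply, map_sum]
  exact Finset.sum_congr rfl fun k _ => by rw [LinearMap.map_smul, Matrix.mulVecLin_apply]

lemma trace_eq_sum_eig (hortho : ∀ j k, v j ⬝ᵥ v k = if j = k then 1 else 0)
    (hcompl : ∀ y : Fin n → ℝ, y = ∑ k, (v k ⬝ᵥ y) • v k)
    {P : Matrix (Fin n) (Fin n) ℝ} {γ : Fin n → ℝ}
    (heig : ∀ k, P *ᵥ v k = γ k • v k) : P.trace = ∑ k, γ k := by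
  classical
  have key : ∀ i : Fin n, P i i = ∑ k, γ k * (v k i) ^ 2 := by
    intro i
    have e3 : ∀ k, v k ⬝ᵥ (Pi.single i 1 : Fin n → ℝ) = v k i := by
      intro k
      classical
      simp [dotProduct, Pi.single_apply]
    have e1 : P *ᵥ (Pi.single i 1 : Fin n → ℝ) = ∑ k, (v k i * γ k) • v k := by
      conv_lhs => rw [hcompl (Pi.single i 1)]
      rw [mulVec_sum_smul]
      exact Finset.sum_congr rfl fun k _ => by
        rw [heig k, e3 k, smul_smul]
    have e2 : P i i = (Pi.single i 1 : Fin n → ℝ) ⬝ᵥ (P *ᵥ (Pi.single i 1 : Fin n → ℝ)) := by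
      simp [single_dotProduct, Matrix.mulVec_single]
    rw [e2, e1, dot_sum]
    refine Finset.sum_congr rfl fun k _ => ?_
    have : (Pi.single i 1 : Fin n → ℝ) ⬝ᵥ v k = v k i := by
      simp [single_dotProduct]
    rw [this]; ring
  rw [Matrix.trace]
  calc ∑ i, P.diag i = ∑ i, ∑ k, γ k * (v k i) ^ 2 := Finset.sum_congr rfl fun i _ => key i
  _ = ∑ k, γ k * ∑ i, (v k i) ^ 2 := by rw [Finset.sum_comm]; simp [Finset.mul_sum]
  _ = ∑ k, γ k := by
      refine Finset.sum_congr rfl fun k _ => ?_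
      have : ∑ i, (v k i) ^ 2 = v k ⬝ᵥ v k := by
        simp [dotProduct, sq]
      rw [this, hortho k k, if_pos rfl, mul_one]

lemma eig_le_of_subspace {A : Matrix (Fin n) (Fin n) ℝ} (hA : A.IsHermitian)
    (lam : Fin n → ℝ) (hanti : Antitone lam) (σ : Equiv.Perm (Fin n))
    (hσ : ∀ j, lam j = hA.eigenvalues (σ j)) (i : Fin n) (t : ℝ)
    (T : Submodule ℝ (Fin n → ℝ))
    (hdim : n ≤ (i : ℕ) + Module.finrank ℝ T)
    (hT : ∀ x ∈ T, x ⬝ᵥ A *ᵥ x ≤ t * (x ⬝ᵥ x)) : lam i ≤ t := by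
  classical
  obtain ⟨v, hortho, hcompl, heig⟩ := exists_onb hA
  set s : Finset (Fin n) := (Finset.Iic i).image σ with hs
  have hcard : s.card = (i : ℕ) + 1 := by
    rw [hs, Finset.card_image_of_injective _ σ.injective, Fin.card_Iic]
  set S : Submodule ℝ (Fin n → ℝ) := span ℝ (v '' ↑s) with hS
  have hfS : Module.finrank ℝ S = (i : ℕ) + 1 := by rw [hS, finrank_span_onb hortho, hcard]
  have hint : 0 < Module.finrank ℝ ↥(S ⊓ T) := by
    have h1 := Submodule.finrank_sup_add_finrank_inf_eq S T
    have h2 : Module.finrank ℝ ↥(S ⊔ T) ≤ n := by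
      simpa using Submodule.finrank_le (S ⊔ T)
    omega
  obtain ⟨⟨x, hxST⟩, hxne⟩ := Module.finrank_pos_iff_exists_ne_zero.mp hint
  have hxne' : x ≠ 0 := fun h => hxne (Subtype.ext h)
  have hxS : x ∈ S := hxST.1
  have hxT : x ∈ T := hxST.2
  have hAsymm : Aᵀ = A := by
    have := hA.eq
    simpa using this
  have hlow : lam i * (x ⬝ᵥ x) ≤ x ⬝ᵥ A *ᵥ x := by
    refine Q_ge_span hortho hAsymm hcompl heig (s := s) (t := lam i) ?_ hxS
    intro k hk
    rw [hs] at hk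
    obtain ⟨j, hj, rfl⟩ := Finset.mem_image.mp hk
    rw [← hσ j]
    exact hanti (Finset.mem_Iic.mp hj)
  have hup := hT x hxT
  have hpos := dot_self_pos hxne'
  nlinarith [hlow, hup, hpos]

lemma inv_Q_le {A B : Matrix (Fin n) (Fin n) ℝ} (hA : A.PosDef) (hB : B.PosDef)
    (hle : ∀ y, y ⬝ᵥ B *ᵥ y ≤ y ⬝ᵥ A *ᵥ y) (x : Fin n → ℝ) :
    x ⬝ᵥ A⁻¹ *ᵥ x ≤ x ⬝ᵥ B⁻¹ *ᵥ x := by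
  have hAinv : A * A⁻¹ = 1 := Matrix.mul_nonsing_inv A hA.det_pos.ne'.isUnit
  have hBinv : B * B⁻¹ = 1 := Matrix.mul_nonsing_inv B hB.det_pos.ne'.isUnit
  have hBsymm : Bᵀ = B := by simpa using hB.isHermitian.eq
  set y : Fin n → ℝ := A⁻¹ *ᵥ x with hy
  set z : Fin n → ℝ := B⁻¹ *ᵥ x with hz
  have hAy : A *ᵥ y = x := by rw [hy, Matrix.mulVec_mulVec, hAinv, Matrix.one_mulVec]
  have hBz : B *ᵥ z = x := by rw [hz, Matrix.mulVec_mulVec, hBinv, Matrix.one_mulVec]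
  have e1 : x ⬝ᵥ A⁻¹ *ᵥ x = 2 * (x ⬝ᵥ y) - y ⬝ᵥ A *ᵥ y := by
    rw [hAy, ← hy]
    rw [dotProduct_comm y x]
    ring
  have hBpsd : 0 ≤ (y - z) ⬝ᵥ B *ᵥ (y - z) := by
    have := hB.posSemidef.dotProduct_mulVec_nonneg (y - z)
    simpa using this
  have hexp : (y - z) ⬝ᵥ B *ᵥ (y - z)
      = y ⬝ᵥ B *ᵥ y - 2 * (x ⬝ᵥ y) + x ⬝ᵥ B⁻¹ *ᵥ x := by
    have hzBy : z ⬝ᵥ B *ᵥ y = x ⬝ᵥ y := by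
      rw [Matrix.dotProduct_mulVec, ← Matrix.mulVec_transpose, hBsymm, hBz]
    have hyBz : y ⬝ᵥ B *ᵥ z = x ⬝ᵥ y := by
      rw [hBz, dotProduct_comm]
    have hzBz : z ⬝ᵥ B *ᵥ z = x ⬝ᵥ B⁻¹ *ᵥ x := by
      rw [hBz, dotProduct_comm, ← hz]
    rw [sub_dotProduct, Matrix.mulVec_sub, dotProduct_sub,
      dotProduct_sub, hzBy, hyBz, hzBz]
    ring
  rw [e1]
  nlinarith [hBpsd, hexp, hle y]

lemma Q_smul_add (W : Matrix (Fin n) (Fin m) ℝ) (c : ℝ) (x : Fin m → ℝ) :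
    x ⬝ᵥ (c • (1 : Matrix (Fin m) (Fin m) ℝ) + Wᵀ * W) *ᵥ x
      = c * (x ⬝ᵥ x) + (W *ᵥ x) ⬝ᵥ (W *ᵥ x) := by
  rw [Matrix.add_mulVec, dotProduct_add, Matrix.smul_mulVec,
    Matrix.one_mulVec, dotProduct_smul, ← Matrix.mulVec_mulVec,
    Matrix.dotProduct_mulVec x, ← Matrix.mulVec_transpose]
  rfl

lemma posdef_smul_add {W : Matrix (Fin n) (Fin m) ℝ} {c : ℝ} (hc : 0 < c) :
    (c • (1 : Matrix (Fin m) (Fin m) ℝ) + Wᵀ * W).PosDef := by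
  refine Matrix.PosDef.of_dotProduct_mulVec_pos ?_ ?_
  · show _ = _
    rw [Matrix.conjTranspose_eq_transpose_of_trivial, Matrix.transpose_add,
      Matrix.transpose_smul, Matrix.transpose_one, Matrix.transpose_mul,
      Matrix.transpose_transpose]
  · intro x hx
    have h1 := Q_smul_add W c x
    have h2 : star x = x := by funext i; simp
    rw [h2, h1]
    have := dot_self_pos hx
    have := dot_self_nonneg (W *ᵥ x)
    nlinarith

lemma swap_inv (W : Matrix (Fin n) (Fin m) ℝ) {c : ℝ} (hc : 0 < c) :
    W * (c • (1 : Matrix (Fin m) (Fin m) ℝ) + Wᵀ * W)⁻¹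
      = (c • (1 : Matrix (Fin n) (Fin n) ℝ) + W * Wᵀ)⁻¹ * W := by
  have hP : (c • (1 : Matrix (Fin m) (Fin m) ℝ) + Wᵀ * W).PosDef := posdef_smul_add hc
  have hQ : (c • (1 : Matrix (Fin n) (Fin n) ℝ) + W * Wᵀ).PosDef := by
    have := posdef_smul_add (W := Wᵀ) hc
    simpa using this
  set P := c • (1 : Matrix (Fin m) (Fin m) ℝ) + Wᵀ * W
  set Q := c • (1 : Matrix (Fin n) (Fin n) ℝ) + W * Wᵀ
  have key : Q * W = W * P := by
    show (c • (1 : Matrix (Fin n) (Fin n) ℝ) + W * Wᵀ) * W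
        = W * (c • (1 : Matrix (Fin m) (Fin m) ℝ) + Wᵀ * W)
    rw [Matrix.add_mul, Matrix.mul_add, Matrix.smul_mul, Matrix.mul_smul, Matrix.one_mul,
      Matrix.mul_one, Matrix.mul_assoc]
  calc W * P⁻¹ = Q⁻¹ * (Q * W) * P⁻¹ := by
        rw [← Matrix.mul_assoc Q⁻¹ Q W, Matrix.nonsing_inv_mul Q hQ.det_pos.ne'.isUnit,
          Matrix.one_mul]
  _ = Q⁻¹ * W * (P * P⁻¹) := by rw [key]; simp only [Matrix.mul_assoc]
  _ = Q⁻¹ * W := by rw [Matrix.mul_nonsing_inv P hP.det_pos.ne'.isUnit, Matrix.mul_one]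

lemma inv_mulVec_eig {A : Matrix (Fin n) (Fin n) ℝ} (hinv : A⁻¹ * A = 1)
    {u : Fin n → ℝ} {t : ℝ} (ht : t ≠ 0) (h : A *ᵥ u = t • u) :
    A⁻¹ *ᵥ u = t⁻¹ • u := by
  have h1 : u = t • (A⁻¹ *ᵥ u) := by
    calc u = (A⁻¹ * A) *ᵥ u := by rw [hinv, Matrix.one_mulVec]
    _ = A⁻¹ *ᵥ (A *ᵥ u) := by rw [← Matrix.mulVec_mulVec]
    _ = t • (A⁻¹ *ᵥ u) := by rw [h, Matrix.mulVec_smul]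
  calc A⁻¹ *ᵥ u = t⁻¹ • (t • (A⁻¹ *ᵥ u)) := by rw [smul_smul, inv_mul_cancel₀ ht, one_smul]
  _ = t⁻¹ • u := by rw [← h1]

lemma sandwich_symm (W : Matrix (Fin n) (Fin m) ℝ) {C : Matrix (Fin m) (Fin m) ℝ}
    (hC : Cᵀ = C) : (W * C * Wᵀ)ᵀ = W * C * Wᵀ := by
  rw [Matrix.transpose_mul, Matrix.transpose_mul, Matrix.transpose_transpose, hC,
    Matrix.mul_assoc]

lemma sandwich_Q (W : Matrix (Fin n) (Fin m) ℝ) (C : Matrix (Fin m) (Fin m) ℝ)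
    (x : Fin n → ℝ) :
    x ⬝ᵥ (W * C * Wᵀ) *ᵥ x = (Wᵀ *ᵥ x) ⬝ᵥ C *ᵥ (Wᵀ *ᵥ x) := by
  rw [← Matrix.mulVec_mulVec, ← Matrix.mulVec_mulVec, Matrix.dotProduct_mulVec x,
    ← Matrix.mulVec_transpose]

lemma posdef_of_Q {M : Matrix (Fin n) (Fin n) ℝ} (h1 : Mᵀ = M)
    (h2 : ∀ x : Fin n → ℝ, x ≠ 0 → 0 < x ⬝ᵥ M *ᵥ x) : M.PosDef := by
  refine Matrix.PosDef.of_dotProduct_mulVec_pos ?_ ?_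
  · show _ = _
    rw [Matrix.conjTranspose_eq_transpose_of_trivial, h1]
  · intro x hx
    have h3 : star x = x := by funext i; simp
    rw [h3]
    exact h2 x hx

lemma posdef_one_add {W : Matrix (Fin n) (Fin m) ℝ} :
    ((1 : Matrix (Fin m) (Fin m) ℝ) + Wᵀ * W).PosDef := by
  have := posdef_smul_add (W := W) (c := (1:ℝ)) one_pos
  simpa using this

lemma Q_one_add (W : Matrix (Fin n) (Fin m) ℝ) (x : Fin m → ℝ) :
    x ⬝ᵥ ((1 : Matrix (Fin m) (Fin m) ℝ) + Wᵀ * W) *ᵥ x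
      = x ⬝ᵥ x + (W *ᵥ x) ⬝ᵥ (W *ᵥ x) := by
  have := Q_smul_add W (1:ℝ) x
  simpa using this

lemma swap_one (W : Matrix (Fin n) (Fin m) ℝ) :
    W * ((1 : Matrix (Fin m) (Fin m) ℝ) + Wᵀ * W)⁻¹
      = ((1 : Matrix (Fin n) (Fin n) ℝ) + W * Wᵀ)⁻¹ * W := by
  have := swap_inv W (c := (1:ℝ)) one_pos
  simpa using this

end M2Aux

open M2Aux Finset Submodule

set_option maxHeartbeats 2000000


/-- Every eigenvalue `λ i` of `M₂` (listed in decreasing order, `i < r = rank M₂`)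
satisfies `λ i ≤ d₂ᵢ²(1 + d₁₁²)/(d₂ᵢ²(1 + d₁₁²) + 1)`, hence
`Tr((I - M₂)⁻¹) ≤ p + ∑_{i<r} d₂ᵢ²(1 + d₁₁²)`, where `d₁₁` is the largest singular value
of `W₁` and `d₂ᵢ` are the singular values of `W₂` in decreasing order. -/
theorem M2_eigenvalue_bounds_and_trace_bound
    (n₀ n₁ p : ℕ) (W₁ : Matrix (Fin n₁) (Fin n₀) ℝ) (W₂ : Matrix (Fin p) (Fin n₁) ℝ)
    (M₂ : Matrix (Fin p) (Fin p) ℝ)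
    (hM₂def : M₂ = W₂ * (1 + W₂ᵀ * W₂ - W₁ * (1 + W₁ᵀ * W₁)⁻¹ * W₁ᵀ)⁻¹ * W₂ᵀ)
    -- the largest singular value of W₁
    (d11 : ℝ) (hd11_nonneg : 0 ≤ d11)
    (hW₁ : (W₁ * W₁ᵀ).IsHermitian)
    (hd11 : IsGreatest (Set.range hW₁.eigenvalues) (d11 ^ 2))
    -- the singular values of W₂, in decreasing order
    (d2 : Fin p → ℝ) (hd2_nonneg : ∀ i, 0 ≤ d2 i) (hd2_anti : Antitone d2)
    (hW₂ : (W₂ * W₂ᵀ).IsHermitian)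
    (hd2 : ∃ σ : Equiv.Perm (Fin p), ∀ i, d2 i ^ 2 = hW₂.eigenvalues (σ i))
    -- the eigenvalues of M₂, in decreasing order
    (hM₂ : M₂.IsHermitian)
    (lam : Fin p → ℝ) (hlam_anti : Antitone lam)
    (hlam : ∃ σ : Equiv.Perm (Fin p), ∀ i, lam i = hM₂.eigenvalues (σ i)) :
    (∀ i : Fin p, (i : ℕ) < M₂.rank →
        lam i ≤ d2 i ^ 2 * (1 + d11 ^ 2) / (d2 i ^ 2 * (1 + d11 ^ 2) + 1)) ∧
      Matrix.trace (1 - M₂)⁻¹ ≤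
        (p : ℝ) + ∑ i ∈ Finset.univ.filter (fun i : Fin p => (i : ℕ) < M₂.rank),
          d2 i ^ 2 * (1 + d11 ^ 2) := by
  classical
  obtain ⟨r, hrdef⟩ : ∃ r : ℕ, M₂.rank = r := ⟨_, rfl⟩
  rw [hrdef]
  obtain ⟨σ₂, hσ₂⟩ := hd2
  obtain ⟨σ, hσ⟩ := hlam
  have h11pos : (0:ℝ) < 1 + d11 ^ 2 := by positivity
  set c : ℝ := 1 / (1 + d11 ^ 2) with hc
  have hcpos : 0 < c := by positivity
  -- eigen data for H := W₁ * W₁ᵀ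
  obtain ⟨u, huortho, hucompl, hueig⟩ := exists_onb hW₁
  set μ : Fin n₁ → ℝ := hW₁.eigenvalues with hμ
  have hμ_nonneg : ∀ k, 0 ≤ μ k := by
    intro k
    have hpsd : (W₁ * W₁ᵀ).PosSemidef := by
      simpa using Matrix.posSemidef_self_mul_conjTranspose W₁
    exact hpsd.eigenvalues_nonneg k
  have hμ_le : ∀ k, μ k ≤ d11 ^ 2 := fun k => hd11.2 ⟨k, rfl⟩
  -- M₁
  set M₁ : Matrix (Fin n₁) (Fin n₁) ℝ := W₁ * (1 + W₁ᵀ * W₁)⁻¹ * W₁ᵀ with hM₁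
  have hPD1H : ((1 : Matrix (Fin n₁) (Fin n₁) ℝ) + W₁ * W₁ᵀ).PosDef := by
    have := posdef_one_add (W := W₁ᵀ)
    simpa using this
  have hM₁H : M₁ = ((1 : Matrix (Fin n₁) (Fin n₁) ℝ) + W₁ * W₁ᵀ)⁻¹ * (W₁ * W₁ᵀ) := by
    rw [hM₁, swap_one W₁, Matrix.mul_assoc]
  have hM₁eig : ∀ k, M₁ *ᵥ u k = (μ k / (1 + μ k)) • u k := by
    intro k
    have h1 : ((1 : Matrix (Fin n₁) (Fin n₁) ℝ) + W₁ * W₁ᵀ) *ᵥ u k = (1 + μ k) • u k := by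
      rw [Matrix.add_mulVec, Matrix.one_mulVec, hueig k, add_smul, one_smul]
    have h1inv : ((1 : Matrix (Fin n₁) (Fin n₁) ℝ) + W₁ * W₁ᵀ)⁻¹ *ᵥ u k
        = (1 + μ k)⁻¹ • u k := by
      refine inv_mulVec_eig (Matrix.nonsing_inv_mul _ hPD1H.det_pos.ne'.isUnit) ?_ h1
      have := hμ_nonneg k; positivity
    rw [hM₁H, ← Matrix.mulVec_mulVec, hueig k, Matrix.mulVec_smul, h1inv, smul_smul,
      div_eq_mul_inv]
  have hM₁symm : M₁ᵀ = M₁ := by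
    rw [hM₁]
    refine sandwich_symm W₁ ?_
    rw [Matrix.transpose_nonsing_inv, Matrix.transpose_add, Matrix.transpose_one,
      Matrix.transpose_mul, Matrix.transpose_transpose]
  have hM₁Q : ∀ y : Fin n₁ → ℝ, y ⬝ᵥ M₁ *ᵥ y ≤ (1 - c) * (y ⬝ᵥ y) := by
    refine Q_le_univ hM₁symm hucompl hM₁eig ?_
    intro k
    have h1 : 1 - c = d11 ^ 2 / (1 + d11 ^ 2) := by
      rw [hc, eq_div_iff h11pos.ne', sub_mul, div_mul_cancel₀ _ h11pos.ne']; ring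
    rw [h1, div_le_div_iff₀ (by have := hμ_nonneg k; positivity) h11pos]
    have h2 := hμ_le k
    have h3 := hμ_nonneg k
    nlinarith
  -- A and B
  set A : Matrix (Fin n₁) (Fin n₁) ℝ := 1 + W₂ᵀ * W₂ - M₁ with hA
  set B : Matrix (Fin n₁) (Fin n₁) ℝ := c • 1 + W₂ᵀ * W₂ with hB
  have hBpd : B.PosDef := posdef_smul_add hcpos
  have hQB : ∀ y : Fin n₁ → ℝ, y ⬝ᵥ B *ᵥ y = c * (y ⬝ᵥ y) + (W₂ *ᵥ y) ⬝ᵥ (W₂ *ᵥ y) :=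
    fun y => Q_smul_add W₂ c y
  have hQA : ∀ y : Fin n₁ → ℝ,
      y ⬝ᵥ A *ᵥ y = (y ⬝ᵥ y) + (W₂ *ᵥ y) ⬝ᵥ (W₂ *ᵥ y) - y ⬝ᵥ M₁ *ᵥ y := by
    intro y
    rw [hA, Matrix.sub_mulVec, dotProduct_sub, Q_one_add W₂ y]
  have hBA : ∀ y : Fin n₁ → ℝ, y ⬝ᵥ B *ᵥ y ≤ y ⬝ᵥ A *ᵥ y := by
    intro y
    rw [hQA y, hQB y]
    have := hM₁Q y
    nlinarith [this]
  have hAsymm : Aᵀ = A := by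
    rw [hA, Matrix.transpose_sub, Matrix.transpose_add, Matrix.transpose_one,
      Matrix.transpose_mul, Matrix.transpose_transpose, hM₁symm]
  have hApd : A.PosDef := by
    refine posdef_of_Q hAsymm ?_
    intro x hx
    have h1 := hBA x
    have h2 := hBpd.dotProduct_mulVec_pos hx
    have h3 : star x = x := by funext i; simp
    rw [h3] at h2
    linarith
  -- M₂ and N
  set N : Matrix (Fin p) (Fin p) ℝ := W₂ * B⁻¹ * W₂ᵀ with hN
  have hQM₂ : ∀ x : Fin p → ℝ, x ⬝ᵥ M₂ *ᵥ x = (W₂ᵀ *ᵥ x) ⬝ᵥ A⁻¹ *ᵥ (W₂ᵀ *ᵥ x) := by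
    intro x; rw [hM₂def]; exact sandwich_Q W₂ A⁻¹ x
  have hQN : ∀ x : Fin p → ℝ, x ⬝ᵥ N *ᵥ x = (W₂ᵀ *ᵥ x) ⬝ᵥ B⁻¹ *ᵥ (W₂ᵀ *ᵥ x) := by
    intro x; rw [hN]; exact sandwich_Q W₂ B⁻¹ x
  have hMN : ∀ x : Fin p → ℝ, x ⬝ᵥ M₂ *ᵥ x ≤ x ⬝ᵥ N *ᵥ x := by
    intro x
    rw [hQM₂ x, hQN x]
    exact inv_Q_le hApd hBpd hBA (W₂ᵀ *ᵥ x)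
  have hM₂psd : M₂.PosSemidef := by
    refine Matrix.PosSemidef.of_dotProduct_mulVec_nonneg hM₂ ?_
    intro x
    have h3 : star x = x := by funext i; simp
    rw [h3, hQM₂ x]
    have := hApd.inv.posSemidef.dotProduct_mulVec_nonneg (W₂ᵀ *ᵥ x)
    have h4 : star (W₂ᵀ *ᵥ x) = W₂ᵀ *ᵥ x := by funext i; simp
    rw [h4] at this
    exact this
  -- eigen data for G := W₂ * W₂ᵀ and N
  obtain ⟨w, hwortho, hwcompl, hweig⟩ := exists_onb hW₂
  set ν : Fin p → ℝ := hW₂.eigenvalues with hν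
  have hν_nonneg : ∀ k, 0 ≤ ν k := by
    intro k
    have hpsd : (W₂ * W₂ᵀ).PosSemidef := by
      simpa using Matrix.posSemidef_self_mul_conjTranspose W₂
    exact hpsd.eigenvalues_nonneg k
  have hGpd : (c • (1 : Matrix (Fin p) (Fin p) ℝ) + W₂ * W₂ᵀ).PosDef := by
    have := posdef_smul_add (W := W₂ᵀ) hcpos
    simpa using this
  have hNG : N = (c • (1 : Matrix (Fin p) (Fin p) ℝ) + W₂ * W₂ᵀ)⁻¹ * (W₂ * W₂ᵀ) := by
    rw [hN, hB, swap_inv W₂ hcpos, Matrix.mul_assoc]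
  have hNeig : ∀ k, N *ᵥ w k = (ν k / (ν k + c)) • w k := by
    intro k
    have h1 : (c • (1 : Matrix (Fin p) (Fin p) ℝ) + W₂ * W₂ᵀ) *ᵥ w k = (ν k + c) • w k := by
      rw [Matrix.add_mulVec, Matrix.smul_mulVec, Matrix.one_mulVec, hweig k, add_smul]
      rw [add_comm]
    have h1inv : (c • (1 : Matrix (Fin p) (Fin p) ℝ) + W₂ * W₂ᵀ)⁻¹ *ᵥ w k
        = (ν k + c)⁻¹ • w k := by
      refine inv_mulVec_eig (Matrix.nonsing_inv_mul _ hGpd.det_pos.ne'.isUnit) ?_ h1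
      have := hν_nonneg k; positivity
    rw [hNG, ← Matrix.mulVec_mulVec, hweig k, Matrix.mulVec_smul, h1inv, smul_smul,
      div_eq_mul_inv]
  have hNsymm : Nᵀ = N := by
    rw [hN]
    refine sandwich_symm W₂ ?_
    rw [Matrix.transpose_nonsing_inv, hB, Matrix.transpose_add, Matrix.transpose_smul,
      Matrix.transpose_one, Matrix.transpose_mul, Matrix.transpose_transpose]
  -- PART 1 : the eigenvalue bound (for all i)
  have claim1 : ∀ i : Fin p,
      lam i ≤ d2 i ^ 2 * (1 + d11 ^ 2) / (d2 i ^ 2 * (1 + d11 ^ 2) + 1) := by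
    intro i
    set D : ℝ := d2 i ^ 2 with hD
    have hD0 : 0 ≤ D := sq_nonneg _
    set t : ℝ := D * (1 + d11 ^ 2) / (D * (1 + d11 ^ 2) + 1) with ht
    have hDenom : 0 < D * (1 + d11 ^ 2) + 1 := by positivity
    have htc : t = D / (D + c) := by
      rw [ht, hc]
      have hne : (1 + d11 ^ 2) ≠ 0 := h11pos.ne'
      have hd : D + 1 / (1 + d11 ^ 2) ≠ 0 := by positivity
      field_simp
      try ring
    have ht0 : 0 ≤ t := by
      rw [ht]; positivity
    set s₂ : Finset (Fin p) := Finset.univ.filter (fun k => ν k ≤ D) with hs₂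
    set T : Submodule ℝ (Fin p → ℝ) := span ℝ (w '' ↑s₂) with hT
    have hνd2 : ∀ k, ν k = d2 (σ₂.symm k) ^ 2 := by
      intro k
      have := hσ₂ (σ₂.symm k)
      rw [Equiv.apply_symm_apply] at this
      exact this.symm
    have hcompl_card : (Finset.univ.filter (fun k => ¬ (ν k ≤ D))).card ≤ (i : ℕ) := by
      have hmaps : ∀ k ∈ Finset.univ.filter (fun k => ¬ (ν k ≤ D)),
          σ₂.symm k ∈ Finset.Iio i := by
        intro k hk
        rw [Finset.mem_filter] at hk
        have hgt : D < ν k := lt_of_not_ge hk.2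
        rw [hνd2 k] at hgt
        rw [Finset.mem_Iio]
        by_contra hcon
        push_neg at hcon
        have : d2 (σ₂.symm k) ≤ d2 i := hd2_anti hcon
        have : d2 (σ₂.symm k) ^ 2 ≤ d2 i ^ 2 :=
          pow_le_pow_left₀ (hd2_nonneg _) this 2
        rw [← hD] at this
        linarith
      have hinj : Set.InjOn (fun k => σ₂.symm k)
          ↑(Finset.univ.filter (fun k => ¬ (ν k ≤ D))) := fun a _ b _ h => by
        simpa using congrArg σ₂ h
      have := Finset.card_le_card_of_injOn _ hmaps hinj
      simpa [Fin.card_Iio] using this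
    have hdim : p ≤ (i : ℕ) + Module.finrank ℝ T := by
      have h1 : Module.finrank ℝ T = s₂.card := by rw [hT, finrank_span_onb hwortho]
      have h2 := Finset.card_filter_add_card_filter_not
        (s := (Finset.univ : Finset (Fin p))) (p := fun k => ν k ≤ D)
      rw [Finset.card_univ, Fintype.card_fin, ← hs₂] at h2
      rw [h1]
      omega
    have hboundT : ∀ x ∈ T, x ⬝ᵥ M₂ *ᵥ x ≤ t * (x ⬝ᵥ x) := by
      intro x hx
      refine le_trans (hMN x) ?_
      refine Q_le_span hwortho hNsymm hwcompl hNeig ?_ ht0 hx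
      intro k hk
      rw [hs₂, Finset.mem_filter] at hk
      have hνk := hk.2
      rw [htc]
      rw [div_le_div_iff₀ (by have := hν_nonneg k; positivity) (by positivity)]
      have := hν_nonneg k
      nlinarith
    exact eig_le_of_subspace hM₂ lam hlam_anti σ hσ i t T hdim hboundT
  have hlam_lt1 : ∀ j : Fin p, lam j < 1 := by
    intro j
    refine lt_of_le_of_lt (claim1 j) ?_
    rw [div_lt_one (by positivity)]
    linarith
  have hlam_nonneg : ∀ j : Fin p, 0 ≤ lam j := by
    intro j
    rw [hσ j]
    exact hM₂psd.eigenvalues_nonneg (σ j)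
  -- PART 2 : the trace bound
  obtain ⟨mm, hmortho, hmcompl, hmeig⟩ := exists_onb hM₂
  set e : Fin p → ℝ := hM₂.eigenvalues with he
  have he_lt1 : ∀ k, e k < 1 := by
    intro k
    have := hlam_lt1 (σ.symm k)
    rw [hσ (σ.symm k), Equiv.apply_symm_apply] at this
    exact this
  have he_nonneg : ∀ k, 0 ≤ e k := fun k => hM₂psd.eigenvalues_nonneg k
  have hsub_eig : ∀ k, (1 - M₂) *ᵥ mm k = (1 - e k) • mm k := by
    intro k
    rw [Matrix.sub_mulVec, Matrix.one_mulVec, hmeig k, sub_smul, one_smul]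
  have hsubpd : ((1 : Matrix (Fin p) (Fin p) ℝ) - M₂).PosDef := by
    refine posdef_of_Q ?_ ?_
    · rw [Matrix.transpose_sub, Matrix.transpose_one]
      have : M₂ᵀ = M₂ := by simpa using hM₂.eq
      rw [this]
    · intro x hx
      have hM₂symm : M₂ᵀ = M₂ := by simpa using hM₂.eq
      have hexp : x ⬝ᵥ ((1 : Matrix (Fin p) (Fin p) ℝ) - M₂) *ᵥ x
          = ∑ k, (1 - e k) * (mm k ⬝ᵥ x) ^ 2 := by
        rw [Matrix.sub_mulVec, Matrix.one_mulVec, dotProduct_sub,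
          Q_expand hM₂symm hmcompl hmeig, dot_expand hmcompl, ← Finset.sum_sub_distrib]
        exact Finset.sum_congr rfl fun k _ => by ring
      rw [hexp]
      have hex : ∃ k, (mm k ⬝ᵥ x) ^ 2 > 0 := by
        by_contra hcon
        push_neg at hcon
        have hall : ∀ k, (mm k ⬝ᵥ x) ^ 2 = 0 := fun k =>
          le_antisymm (hcon k) (sq_nonneg _)
        have := dot_expand hmcompl x
        rw [Finset.sum_congr rfl (fun k _ => hall k)] at this
        simp at this
        exact absurd this hx
      obtain ⟨k₀, hk₀⟩ := hex
      refine Finset.sum_pos' (fun k _ => ?_) ⟨k₀, Finset.mem_univ k₀, ?_⟩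
      · have := he_lt1 k
        nlinarith [sq_nonneg (mm k ⬝ᵥ x)]
      · have := he_lt1 k₀
        nlinarith
  have hinv_eig : ∀ k, ((1 : Matrix (Fin p) (Fin p) ℝ) - M₂)⁻¹ *ᵥ mm k
      = (1 - e k)⁻¹ • mm k := by
    intro k
    refine inv_mulVec_eig (Matrix.nonsing_inv_mul _ hsubpd.det_pos.ne'.isUnit) ?_
      (hsub_eig k)
    have := he_lt1 k; linarith
  have htrace : Matrix.trace ((1 : Matrix (Fin p) (Fin p) ℝ) - M₂)⁻¹
      = ∑ k, (1 - e k)⁻¹ :=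
    trace_eq_sum_eig hmortho hmcompl hinv_eig
  have htrace2 : Matrix.trace ((1 : Matrix (Fin p) (Fin p) ℝ) - M₂)⁻¹
      = ∑ j, (1 - lam j)⁻¹ := by
    rw [htrace, ← Equiv.sum_comp σ (fun k => (1 - e k)⁻¹)]
    exact Finset.sum_congr rfl fun j _ => by rw [← hσ j]
  -- rank facts
  have hcard_lam : (Finset.univ.filter (fun j => lam j ≠ 0)).card = r := by
    have h1 : Fintype.card {k // e k ≠ 0} = r := by
      rw [← hrdef, hM₂.rank_eq_card_non_zero_eigs]
    have h2 : Fintype.card {j // lam j ≠ 0} = Fintype.card {k // e k ≠ 0} := by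
      refine Fintype.card_congr (Equiv.subtypeEquiv σ ?_)
      intro j
      rw [hσ j]
    rw [← h1, ← h2, Fintype.card_subtype]
  have hr_le_p : r ≤ p := by
    rw [← hcard_lam]
    calc (Finset.univ.filter (fun j => lam j ≠ 0)).card ≤ Finset.univ.card :=
      Finset.card_le_card (Finset.filter_subset _ _)
    _ = p := by rw [Finset.card_univ, Fintype.card_fin]
  have hlam_zero : ∀ j : Fin p, r ≤ (j : ℕ) → lam j = 0 := by
    intro j hj
    by_contra hne
    have hposj : 0 < lam j := lt_of_le_of_ne (hlam_nonneg j) (Ne.symm hne)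
    have hsub : Finset.Iic j ⊆ Finset.univ.filter (fun j' => lam j' ≠ 0) := by
      intro j' hj'
      rw [Finset.mem_filter]
      refine ⟨Finset.mem_univ _, ?_⟩
      have hle : lam j ≤ lam j' := hlam_anti (Finset.mem_Iic.mp hj')
      exact (lt_of_lt_of_le hposj hle).ne'
    have := Finset.card_le_card hsub
    rw [Fin.card_Iic, hcard_lam] at this
    omega
  -- putting it together
  refine ⟨fun i _ => claim1 i, ?_⟩
  have hgoal : Matrix.trace ((1 : Matrix (Fin p) (Fin p) ℝ) - M₂)⁻¹
      ≤ (p : ℝ) + ∑ i ∈ Finset.univ.filter (fun i : Fin p => (i : ℕ) < r),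
        d2 i ^ 2 * (1 + d11 ^ 2) := by
    rw [htrace2]
    rw [← Finset.sum_filter_add_sum_filter_not Finset.univ (fun j : Fin p => (j : ℕ) < r)]
    have hsum2 : ∑ j ∈ Finset.univ.filter (fun j : Fin p => ¬ ((j : ℕ) < r)),
        (1 - lam j)⁻¹
        = ((Finset.univ.filter (fun j : Fin p => ¬ ((j : ℕ) < r))).card : ℝ) := by
      rw [Finset.sum_congr rfl (fun j hj => ?_), Finset.sum_const, nsmul_eq_mul, mul_one]
      rw [Finset.mem_filter] at hj
      rw [hlam_zero j (le_of_not_gt hj.2)]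
      norm_num
    have hsum1 : ∑ j ∈ Finset.univ.filter (fun j : Fin p => (j : ℕ) < r), (1 - lam j)⁻¹
        ≤ ∑ j ∈ Finset.univ.filter (fun j : Fin p => (j : ℕ) < r),
          (1 + d2 j ^ 2 * (1 + d11 ^ 2)) := by
      refine Finset.sum_le_sum fun j _ => ?_
      have hD0 : (0:ℝ) ≤ d2 j ^ 2 * (1 + d11 ^ 2) := by positivity
      have h1 : lam j ≤ d2 j ^ 2 * (1 + d11 ^ 2) / (d2 j ^ 2 * (1 + d11 ^ 2) + 1) :=
        claim1 j
      have h2 : 0 < 1 - lam j := by linarith [hlam_lt1 j]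
      have h5 : lam j * (d2 j ^ 2 * (1 + d11 ^ 2) + 1) ≤ d2 j ^ 2 * (1 + d11 ^ 2) :=
        (le_div_iff₀ (by positivity)).mp h1
      have h4 : (1 - lam j)⁻¹ ≤ d2 j ^ 2 * (1 + d11 ^ 2) + 1 := by
        rw [← one_div, div_le_iff₀ h2]
        nlinarith
      linarith
    have hcards : ((Finset.univ.filter (fun j : Fin p => (j : ℕ) < r)).card : ℝ)
        + ((Finset.univ.filter (fun j : Fin p => ¬ ((j : ℕ) < r))).card : ℝ) = p := by
      have := Finset.card_filter_add_card_filter_not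
        (s := (Finset.univ : Finset (Fin p))) (p := fun j : Fin p => (j : ℕ) < r)
      rw [Finset.card_univ, Fintype.card_fin] at this
      exact_mod_cast congrArg (Nat.cast (R := ℝ)) this
    rw [hsum2]
    have hexpand : ∑ j ∈ Finset.univ.filter (fun j : Fin p => (j : ℕ) < r),
        (1 + d2 j ^ 2 * (1 + d11 ^ 2))
        = ((Finset.univ.filter (fun j : Fin p => (j : ℕ) < r)).card : ℝ)
          + ∑ j ∈ Finset.univ.filter (fun j : Fin p => (j : ℕ) < r),
            d2 j ^ 2 * (1 + d11 ^ 2) := by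
      rw [Finset.sum_add_distrib, Finset.sum_const, nsmul_eq_mul, mul_one]
    linarith [hsum1]
  exact hgoal
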